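/- Let G be a finite group and N a normal subgroup of G.ari Suppose that for every real element x of G whose order is a power of an odd prime, the conjugacy class size |x^G| is a power of 2 or is not divisible by 4. Then the same holds for N and for the quotient G/N: every real element of N (respectively of G/N) of odd prime power order has conjugacy class size in N (respectively in G/N) that is a power of 2 or not divisible by 4. -/

import Mathlib

open Subgroup MulAction Pointwise

section Helpers

variable {G : Type*} [Group G]


lemma card_class_eq (x : G) :
    Nat.card {y : G | IsConj x y} = (Subgroup.centralizer {x}).index := by
  have h1 : {y : G | IsConj x y} = MulAction.orbit (ConjAct G) x := by
    ext y
    rw [Set.mem_setOf_eq, ConjAct.mem_orbit_conjAct]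
    exact isConj_comm
  rw [h1, Nat.card_coe_set_eq, ← MulAction.index_stabilizer,
    Subgroup.centralizer_eq_comap_stabilizer]
  exact (Subgroup.index_comap_of_surjective (f := (ConjAct.toConjAct : G ≃* ConjAct G).toMonoidHom)
    _ ConjAct.toConjAct.surjective).symm

lemma relIndex_dvd_index_of_normal' [Finite G] (H N : Subgroup G) [N.Normal] :
    H.relIndex N ∣ H.index := by
  have key1 : H.relIndex N * N.index = (H ⊓ N).index := by
    rw [← Subgroup.inf_relIndex_right H N]
    exact Subgroup.relIndex_mul_index inf_le_right
  have key2 : N.relIndex H * H.index = (H ⊓ N).index := by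
    rw [← Subgroup.inf_relIndex_left H N]
    exact Subgroup.relIndex_mul_index inf_le_left
  obtain ⟨c, hc⟩ := Subgroup.relIndex_dvd_index_of_normal N H
  have hb : N.relIndex H ≠ 0 := by
    intro h0
    have := key2
    rw [h0, zero_mul] at this
    exact (Subgroup.index_ne_zero_of_finite (H := H ⊓ N)) this.symm
  refine ⟨c, ?_⟩
  have : N.relIndex H * (H.relIndex N * N.index) = N.relIndex H * (H.relIndex N * (N.relIndex H * c)) := by
    rw [hc]
  rw [key1, ← key2] at this
  have h2 : N.relIndex H * H.index = N.relIndex H * (H.relIndex N * c) := by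
    have := mul_left_cancel₀ hb this.symm
    rw [← this]
    ring
  exact (mul_left_cancel₀ hb h2)

lemma dvd_transfer {a b : ℕ} (hab : a ∣ b)
    (hb : (∃ m, b = 2 ^ m) ∨ ¬ (4 ∣ b)) : (∃ m, a = 2 ^ m) ∨ ¬ (4 ∣ a) := by
  rcases hb with ⟨m, rfl⟩ | hb
  · left
    obtain ⟨j, _, rfl⟩ := (Nat.dvd_prime_pow Nat.prime_two).mp hab
    exact ⟨j, rfl⟩
  · right
    exact fun h4 => hb (h4.trans hab)


lemma conj_pow_parity {H : Type*} [Group H] {c x : H} (hc : c * x * c⁻¹ = x⁻¹) :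
    ∀ j : ℕ, c ^ j * x * (c ^ j)⁻¹ = if Even j then x else x⁻¹ := by
  have hc' : c * x⁻¹ * c⁻¹ = x := by
    have := congrArg (·⁻¹) hc
    simpa [mul_assoc] using this
  intro j
  induction j with
  | zero => simp
  | succ n ih =>
    have : c ^ (n + 1) * x * (c ^ (n + 1))⁻¹ = c * (c ^ n * x * (c ^ n)⁻¹) * c⁻¹ := by
      group
    rw [this, ih]
    by_cases he : Even n
    · simp [he, Nat.even_add_one, hc]
    · simp [he, Nat.even_add_one, hc']

lemma conj_pow_odd {H : Type*} [Group H] {c x : H} (hc : c * x * c⁻¹ = x⁻¹)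
    {t : ℕ} (ht : Odd t) : c ^ t * x * (c ^ t)⁻¹ = x⁻¹ := by
  rw [conj_pow_parity hc t, if_neg (Nat.not_even_iff_odd.mpr ht)]

lemma exists_pow_primePart {q : ℕ} (hq : q.Prime) (g : G) (hg : orderOf g ≠ 0) :
    ∃ t : ℕ, ¬ q ∣ t ∧ orderOf (g ^ t) = q ^ ((orderOf g).factorization q) := by
  set n := orderOf g with hn
  refine ⟨n / q ^ n.factorization q, Nat.not_dvd_ordCompl hq hg, ?_⟩
  have htdvd : n / q ^ n.factorization q ∣ n := Nat.ordCompl_dvd n q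
  have ht0 : n / q ^ n.factorization q ≠ 0 := (Nat.ordCompl_pos q hg).ne'
  rw [orderOf_pow' g ht0, ← hn,
    Nat.gcd_eq_right htdvd, Nat.div_div_self (Nat.ordProj_dvd n q) hg]
lemma exists_ppow_lift [Finite G] (N : Subgroup G) [N.Normal] {p k : ℕ}
    (hp : p.Prime) (x : G ⧸ N) (hx : orderOf x = p ^ k) :
    ∃ y : G, QuotientGroup.mk' N y = x ∧ ∃ b, orderOf y = p ^ b := by
  by_cases hk : p ^ k = 1
  · have hx1 : x = 1 := orderOf_eq_one_iff.mp (hx.trans hk)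
    exact ⟨1, by simp [hx1], 0, by simp⟩
  obtain ⟨g, hg⟩ := QuotientGroup.mk'_surjective N x
  have hgord : orderOf g ≠ 0 := (orderOf_pos g).ne'
  obtain ⟨t, hqt, hot⟩ := exists_pow_primePart hp g hgord
  have hcop : Nat.Coprime t (p ^ k) :=
    Nat.Coprime.pow_right k (((Nat.Prime.coprime_iff_not_dvd hp).mpr hqt).symm)
  have hk1 : 1 < p ^ k := lt_of_le_of_ne (Nat.one_le_iff_ne_zero.mpr (pow_ne_zero k hp.pos.ne')) (Ne.symm hk)
  obtain ⟨e, he⟩ := Nat.exists_mul_mod_eq_one_of_coprime hcop hk1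
  refine ⟨g ^ (t * e), ?_, ?_⟩
  · have : (QuotientGroup.mk' N) (g ^ (t * e)) = x ^ (t * e) := by
      rw [map_pow, hg]
    rw [this, ← pow_mod_orderOf, hx, he.2, pow_one]
  · have hdvd : orderOf (g ^ (t * e)) ∣ p ^ ((orderOf g).factorization p) := by
      rw [pow_mul]
      exact hot ▸ orderOf_pow_dvd e
    obtain ⟨b, _, hb⟩ := (Nat.dvd_prime_pow hp).mp hdvd
    exact ⟨b, hb⟩


def conjAut {M : Subgroup G} {h : G} (hn : ∀ g : G, g ∈ M ↔ h * g * h⁻¹ ∈ M) :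
    MulAut ↥M where
  toFun z := ⟨h * z * h⁻¹, (hn z).mp z.2⟩
  invFun z := ⟨h⁻¹ * z * h, by
    refine (hn (h⁻¹ * ↑z * h)).mpr ?_
    have : h * (h⁻¹ * ↑z * h) * h⁻¹ = (z : G) := by group
    rw [this]; exact z.2⟩
  left_inv z := Subtype.ext (by simp only []; group)
  right_inv z := Subtype.ext (by simp only []; group)
  map_mul' a b := Subtype.ext (by simp only [Subgroup.coe_mul]; group)

lemma conjAut_apply {M : Subgroup G} {h : G} (hn : ∀ g : G, g ∈ M ↔ h * g * h⁻¹ ∈ M)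
    (z : ↥M) : (conjAut hn z : G) = h * z * h⁻¹ := rfl

lemma conjAut_symm_apply {M : Subgroup G} {h : G} (hn : ∀ g : G, g ∈ M ↔ h * g * h⁻¹ ∈ M)
    (z : ↥M) : ((conjAut hn)⁻¹ z : G) = h⁻¹ * z * h := rfl

lemma exists_conj_normalizer [Finite G] {p : ℕ} [Fact p.Prime] (M : Subgroup G) {h : G}
    (hn : ∀ g : G, g ∈ M ↔ h * g * h⁻¹ ∈ M) (P : Sylow p ↥M) :
    ∃ m : ↥M, (↑m * h) ∈ Subgroup.normalizer (((P : Subgroup ↥M).map M.subtype : Subgroup G) : Set G) := by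
  set σ := conjAut hn with hσ
  obtain ⟨m, hm⟩ := MulAction.exists_smul_eq (↥M) (σ • P) P
  have hsub : (MulAut.conj m) • (σ • (P : Subgroup ↥M)) = (P : Subgroup ↥M) := by
    have := congrArg (fun Q : Sylow p ↥M => (Q : Subgroup ↥M)) hm
    simpa [Sylow.smul_def, Sylow.pointwise_smul_def] using this
  refine ⟨m, Subgroup.mem_normalizer_iff.mpr (fun w => ?_)⟩
  constructor
  · rintro hw
    obtain ⟨z, hz, rfl⟩ := Subgroup.mem_map.mp hw
    have h1 : σ z ∈ σ • (P : Subgroup ↥M) := Subgroup.smul_mem_pointwise_smul _ _ _ hz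
    have h2 : MulAut.conj m • (σ z) ∈ MulAut.conj m • (σ • (P : Subgroup ↥M)) :=
      Subgroup.smul_mem_pointwise_smul _ _ _ h1
    rw [hsub] at h2
    refine Subgroup.mem_map.mpr ⟨MulAut.conj m • (σ z), h2, ?_⟩
    show ((MulAut.conj m (σ z) : ↥M) : G) = _
    rw [MulAut.conj_apply]
    simp only [hσ, Subgroup.coe_mul, Subgroup.coe_inv, conjAut_apply, Subgroup.coe_subtype]
    group
  · rintro hw
    obtain ⟨z, hz, hzeq⟩ := Subgroup.mem_map.mp hw
    rw [← hsub] at hz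
    have h1 := Subgroup.mem_pointwise_smul_iff_inv_smul_mem.mp hz
    have h2 := Subgroup.mem_pointwise_smul_iff_inv_smul_mem.mp h1
    refine Subgroup.mem_map.mpr ⟨_, h2, ?_⟩
    show ((σ⁻¹ ((MulAut.conj m)⁻¹ • z) : ↥M) : G) = w
    have hcoe : (((MulAut.conj m)⁻¹ • z : ↥M) : G) = ↑m⁻¹ * ↑z * ↑m := by
      show (((MulAut.conj m).symm z : ↥M) : G) = _
      rw [MulAut.conj_symm_apply]
      simp only [Subgroup.coe_mul, Subgroup.coe_inv]
    rw [hσ, conjAut_symm_apply, hcoe]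
    have hze : (z : G) = (↑m * h) * w * (↑m * h)⁻¹ := hzeq ▸ rfl
    rw [hze]
    simp only [Subgroup.coe_mul, Subgroup.coe_inv, mul_inv_rev]
    group
lemma quotient_real_lift [Finite G] (N : Subgroup G) [N.Normal] {p k : ℕ}
    (hp : p.Prime) (hpodd : Odd p) (x : G ⧸ N) (hreal : IsConj x x⁻¹)
    (hx : orderOf x = p ^ k) :
    ∃ g : G, QuotientGroup.mk' N g = x ∧ IsConj g g⁻¹ ∧ ∃ b, orderOf g = p ^ b := by
  haveI : Fact p.Prime := ⟨hp⟩
  haveI : Fact (Nat.Prime 2) := ⟨Nat.prime_two⟩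
  obtain ⟨y, hy, b, hyb⟩ := exists_ppow_lift N hp x hx
  obtain ⟨c, hc⟩ := isConj_iff.mp hreal
  obtain ⟨h₁, hh₁⟩ := QuotientGroup.mk'_surjective N c
  obtain ⟨t, h2t, hth⟩ := exists_pow_primePart Nat.prime_two h₁ (orderOf_pos h₁).ne'
  set h₀ := h₁ ^ t with hh₀
  have hinv : (QuotientGroup.mk' N) h₀ * x * ((QuotientGroup.mk' N) h₀)⁻¹ = x⁻¹ := by
    rw [hh₀, map_pow, hh₁]
    exact conj_pow_odd hc (Nat.not_even_iff_odd.mp (fun he => h2t he.two_dvd))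
  have hinv' : ((QuotientGroup.mk' N) h₀)⁻¹ * x * (QuotientGroup.mk' N) h₀ = x⁻¹ := by
    have h2 : (QuotientGroup.mk' N) h₀ * x⁻¹ * ((QuotientGroup.mk' N) h₀)⁻¹ = x := by
      have := congrArg (·⁻¹) hinv
      simpa [mul_assoc] using this
    calc ((QuotientGroup.mk' N) h₀)⁻¹ * x * (QuotientGroup.mk' N) h₀
        = ((QuotientGroup.mk' N) h₀)⁻¹ * ((QuotientGroup.mk' N) h₀ * x⁻¹ *
            ((QuotientGroup.mk' N) h₀)⁻¹) * (QuotientGroup.mk' N) h₀ := by rw [h2]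
      _ = x⁻¹ := by group
  set M := (Subgroup.zpowers x).comap (QuotientGroup.mk' N) with hM
  have hMnorm : ∀ g : G, g ∈ M ↔ h₀ * g * h₀⁻¹ ∈ M := by
    intro g
    simp only [hM, Subgroup.mem_comap, map_mul, map_inv]
    constructor
    · intro hg
      obtain ⟨i, hi⟩ := Subgroup.mem_zpowers_iff.mp hg
      refine Subgroup.mem_zpowers_iff.mpr ⟨-i, ?_⟩
      rw [← hi, ← conj_zpow, hinv, inv_zpow, zpow_neg]
    · intro hg
      obtain ⟨i, hi⟩ := Subgroup.mem_zpowers_iff.mp hg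
      refine Subgroup.mem_zpowers_iff.mpr ⟨-i, ?_⟩
      have h3 : ((QuotientGroup.mk' N) h₀)⁻¹ * ((QuotientGroup.mk' N) h₀ *
          (QuotientGroup.mk' N) g * ((QuotientGroup.mk' N) h₀)⁻¹) * (QuotientGroup.mk' N) h₀ =
          (QuotientGroup.mk' N) g := by group
      have h4 : ((QuotientGroup.mk' N) h₀)⁻¹ * x ^ i * (((QuotientGroup.mk' N) h₀)⁻¹)⁻¹
          = x ^ (-i) := by
        rw [← conj_zpow,
          show ((QuotientGroup.mk' N) h₀)⁻¹ * x * (((QuotientGroup.mk' N) h₀)⁻¹)⁻¹ = x⁻¹ from by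
            rw [inv_inv]; exact hinv', inv_zpow, zpow_neg]
      rw [inv_inv] at h4
      rw [← h3, ← hi]
      exact h4.symm
  have hyM : y ∈ M := Subgroup.mem_comap.mpr (by rw [hy]; exact Subgroup.mem_zpowers x)
  have hyP : IsPGroup p (Subgroup.zpowers (⟨y, hyM⟩ : ↥M)) :=
    IsPGroup.of_card (by rw [Nat.card_zpowers, Subgroup.orderOf_mk, hyb])
  obtain ⟨P, hP⟩ := hyP.exists_le_sylow
  obtain ⟨m, hmem⟩ := exists_conj_normalizer M hMnorm P
  set P₁ := (P : Subgroup ↥M).map M.subtype with hP₁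
  set h' := (↑m : G) * h₀ with hh'
  obtain ⟨t₂, h2t₂, ht₂h⟩ := exists_pow_primePart Nat.prime_two h' (orderOf_pos h').ne'
  set s := (orderOf h').factorization 2 with hs
  set h'' := h' ^ t₂ with hh''
  have hnorm'' : h'' ∈ Subgroup.normalizer (P₁ : Set G) := pow_mem hmem t₂
  have hords : orderOf h'' = 2 ^ s := ht₂h
  have hminv' : (QuotientGroup.mk' N) h' * x * ((QuotientGroup.mk' N) h')⁻¹ = x⁻¹ := by
    rw [hh', map_mul]
    obtain ⟨i, hi⟩ := Subgroup.mem_zpowers_iff.mp (Subgroup.mem_comap.mp m.2)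
    rw [← hi, mul_inv_rev]
    calc x ^ i * (QuotientGroup.mk' N) h₀ * x * (((QuotientGroup.mk' N) h₀)⁻¹ * (x ^ i)⁻¹)
        = x ^ i * ((QuotientGroup.mk' N) h₀ * x * ((QuotientGroup.mk' N) h₀)⁻¹) * (x ^ i)⁻¹ := by
          group
      _ = x ^ i * x⁻¹ * (x ^ i)⁻¹ := by rw [hinv]
      _ = x⁻¹ := by group
  have hminv : (QuotientGroup.mk' N) h'' * x * ((QuotientGroup.mk' N) h'')⁻¹ = x⁻¹ := by
    rw [hh'', map_pow]
    exact conj_pow_odd hminv' (Nat.not_even_iff_odd.mp (fun he => h2t₂ he.two_dvd))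
  have hminv2 : (QuotientGroup.mk' N) h'' * x⁻¹ * ((QuotientGroup.mk' N) h'')⁻¹ = x := by
    have := congrArg (·⁻¹) hminv
    simpa [mul_assoc] using this
  have hminv3 : ((QuotientGroup.mk' N) h'')⁻¹ * x⁻¹ * (QuotientGroup.mk' N) h'' = x := by
    rw [← hminv]; group
  set C := {w : G | w ∈ P₁ ∧ (QuotientGroup.mk' N) w = x} with hC
  have hyP₁ : y ∈ P₁ := Subgroup.mem_map.mpr ⟨⟨y, hyM⟩, hP (Subgroup.mem_zpowers _), rfl⟩
  have hyC : y ∈ C := ⟨hyP₁, hy⟩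
  have hP₁p : IsPGroup p P₁ := P.isPGroup'.map M.subtype
  have hnormiff := Subgroup.mem_normalizer_iff.mp hnorm''
  -- the permutation
  have hπmem : ∀ w : ↥C, h'' * (↑w : G)⁻¹ * h''⁻¹ ∈ C := by
    rintro ⟨w, hw1, hw2⟩
    refine ⟨(hnormiff _).mp (inv_mem hw1), ?_⟩
    simp only [map_mul, map_inv, hw2]
    exact hminv2
  have hπmem' : ∀ w : ↥C, h''⁻¹ * (↑w : G)⁻¹ * h'' ∈ C := by
    rintro ⟨w, hw1, hw2⟩
    constructor
    · refine (hnormiff _).mpr ?_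
      have : h'' * (h''⁻¹ * w⁻¹ * h'') * h''⁻¹ = w⁻¹ := by group
      rw [this]
      exact inv_mem hw1
    · simp only [map_mul, map_inv, hw2]
      exact hminv3
  set π : Equiv.Perm ↥C := {
    toFun := fun w => ⟨h'' * (↑w : G)⁻¹ * h''⁻¹, hπmem w⟩
    invFun := fun w => ⟨h''⁻¹ * (↑w : G)⁻¹ * h'', hπmem' w⟩
    left_inv := fun w => Subtype.ext (by simp only []; group)
    right_inv := fun w => Subtype.ext (by simp only []; group) } with hπ
  have hπapply : ∀ w : ↥C, ((π w : ↥C) : G) = h'' * (↑w : G)⁻¹ * h''⁻¹ := fun w => rfl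
  have hπ2 : ∀ (n : ℕ) (w : ↥C), (((π ^ (2 * n)) w : ↥C) : G)
      = h'' ^ (2 * n) * (↑w : G) * (h'' ^ (2 * n))⁻¹ := by
    intro n
    induction n with
    | zero => intro w; simp
    | succ n ih =>
      intro w
      have hsplit : π ^ (2 * (n + 1)) = π ^ (2 * n) * π ^ 2 := by
        rw [← pow_add]; ring_nf
      rw [hsplit, Equiv.Perm.mul_apply, ih]
      have h2w : (((π ^ 2) w : ↥C) : G) = h'' ^ 2 * (↑w : G) * (h'' ^ 2)⁻¹ := by
        rw [sq, Equiv.Perm.mul_apply, hπapply, hπapply, pow_two]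
        group
      rw [h2w]
      group
  have hπpow : π ^ (2 * 2 ^ s) = 1 := by
    apply Equiv.ext
    intro w
    apply Subtype.ext
    show (((π ^ (2 * 2 ^ s)) w : ↥C) : G) = ((w : ↥C) : G)
    rw [hπ2 (2 ^ s) w]
    have h2 : h'' ^ (2 * 2 ^ s) = 1 := by
      rw [mul_comm 2 (2 ^ s), pow_mul, ← hords, pow_orderOf_eq_one, one_pow]
    rw [h2]
    simp
  have hπdvd : orderOf π ∣ 2 ^ (s + 1) := by
    have : (2 : ℕ) * 2 ^ s = 2 ^ (s + 1) := by ring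
    exact this ▸ orderOf_dvd_of_pow_eq_one hπpow
  obtain ⟨u, _, hu⟩ := (Nat.dvd_prime_pow Nat.prime_two).mp hπdvd
  have hZp : IsPGroup 2 ↥(Subgroup.zpowers π) :=
    IsPGroup.of_card (by rw [Nat.card_zpowers, hu])
  have hcardC : ¬ (2 ∣ Nat.card ↥C) := by
    have e : ↥C ≃ ↥(P₁ ⊓ N) := {
      toFun := fun w => ⟨y⁻¹ * (↑w : G), Subgroup.mem_inf.mpr
        ⟨mul_mem (inv_mem hyP₁) w.2.1,
         (QuotientGroup.eq_one_iff _).mp (by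
            show (QuotientGroup.mk' N) (y⁻¹ * (↑w : G)) = 1
            rw [map_mul, map_inv, hy, w.2.2, inv_mul_cancel])⟩⟩
      invFun := fun n => ⟨y * (↑n : G), ⟨mul_mem hyP₁ (Subgroup.mem_inf.mp n.2).1, by
        have hn : ((↑n : G) : G ⧸ N) = 1 :=
          (QuotientGroup.eq_one_iff _).mpr (Subgroup.mem_inf.mp n.2).2
        rw [map_mul, hy, QuotientGroup.mk'_apply, hn, mul_one]⟩⟩
      left_inv := fun w => Subtype.ext (by simp only []; group)
      right_inv := fun n => Subtype.ext (by simp only []; group) }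
    have hinf : IsPGroup p ↥(P₁ ⊓ N) := IsPGroup.to_inf_left hP₁p
    obtain ⟨j, hj⟩ := hinf.exists_card_eq
    rw [Nat.card_congr e, hj]
    have hoddp : Odd (p ^ j) := hpodd.pow
    rw [Nat.odd_iff] at hoddp
    omega
  obtain ⟨w₀, hw₀⟩ := hZp.nonempty_fixed_point_of_prime_not_dvd_card ↥C hcardC
  have hfix2 : π w₀ = w₀ := by
    have := hw₀ ⟨π, Subgroup.mem_zpowers π⟩
    simpa [Equiv.Perm.smul_def] using this
  have hfixg : h'' * (↑w₀ : G)⁻¹ * h''⁻¹ = ↑w₀ := Subtype.ext_iff.mp hfix2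
  refine ⟨↑w₀, w₀.2.2, ?_, ?_⟩
  · rw [isConj_iff]
    refine ⟨h'', ?_⟩
    have := congrArg (·⁻¹) hfixg
    simp only [mul_inv_rev, inv_inv] at this
    rw [← this]
    group
  · obtain ⟨k₀, hk₀⟩ := hP₁p ⟨↑w₀, w₀.2.1⟩
    have : (↑w₀ : G) ^ (p ^ k₀) = 1 := by
      have := congrArg (fun z : ↥P₁ => (z : G)) hk₀
      simpa using this
    obtain ⟨b', _, hb'⟩ := (Nat.dvd_prime_pow hp).mp (orderOf_dvd_of_pow_eq_one this)
    exact ⟨b', hb'⟩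

end Helpers


/-- The property "every real element of odd prime power order has conjugacy
class size a power of 2 or not divisible by 4" is inherited by normal
subgroups and quotients. -/
theorem stmt_5 (G : Type*) [Group G] [Finite G] (N : Subgroup G) [N.Normal]
    (h : ∀ x : G, IsConj x x⁻¹ →
      (∃ p k : ℕ, p.Prime ∧ Odd p ∧ orderOf x = p ^ k) →
      (∃ m : ℕ, Nat.card {y : G | IsConj x y} = 2 ^ m) ∨
        ¬ (4 ∣ Nat.card {y : G | IsConj x y})) :
    (∀ x : N, IsConj x x⁻¹ →
      (∃ p k : ℕ, p.Prime ∧ Odd p ∧ orderOf x = p ^ k) →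
      (∃ m : ℕ, Nat.card {y : N | IsConj x y} = 2 ^ m) ∨
        ¬ (4 ∣ Nat.card {y : N | IsConj x y})) ∧
    (∀ x : G ⧸ N, IsConj x x⁻¹ →
      (∃ p k : ℕ, p.Prime ∧ Odd p ∧ orderOf x = p ^ k) →
      (∃ m : ℕ, Nat.card {y : G ⧸ N | IsConj x y} = 2 ^ m) ∨
        ¬ (4 ∣ Nat.card {y : G ⧸ N | IsConj x y})) := by
  constructor
  · intro x hxr hxo
    obtain ⟨p, k, hp, hpodd, hord⟩ := hxo
    obtain ⟨c, hc⟩ := isConj_iff.mp hxr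
    have hGreal : IsConj (↑x : G) (↑x)⁻¹ := isConj_iff.mpr ⟨↑c, by
      have := congrArg (fun z : ↥N => (z : G)) hc
      push_cast at this
      exact this⟩
    have hdvd : Nat.card {y : ↥N | IsConj x y} ∣ Nat.card {y : G | IsConj (↑x : G) y} := by
      rw [card_class_eq, card_class_eq]
      have hcent : (Subgroup.centralizer {x} : Subgroup ↥N)
          = (Subgroup.centralizer {(↑x : G)}).subgroupOf N := by
        ext z
        simp only [Subgroup.mem_centralizer_iff, Set.mem_singleton_iff, forall_eq,
          Subgroup.mem_subgroupOf, Subtype.ext_iff, Subgroup.coe_mul]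
        constructor
        · intro hz
          exact hz x rfl
        · intro hz w hw
          have : w = x := Subtype.ext hw
          subst this
          exact hz
      rw [hcent]
      exact relIndex_dvd_index_of_normal' _ N
    exact dvd_transfer hdvd (h ↑x hGreal ⟨p, k, hp, hpodd, by
      rw [Subgroup.orderOf_coe]; exact hord⟩)
  · intro x hxr hxo
    obtain ⟨p, k, hp, hpodd, hord⟩ := hxo
    obtain ⟨g, hg, hgreal, b, hb⟩ := quotient_real_lift N hp hpodd x hxr hord
    have hdvd : Nat.card {y : G ⧸ N | IsConj x y} ∣ Nat.card {y : G | IsConj g y} := by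
      rw [card_class_eq, card_class_eq]
      have hle : (Subgroup.centralizer {g}).map (QuotientGroup.mk' N)
          ≤ Subgroup.centralizer {x} := by
        rintro z hz
        obtain ⟨w, hw, rfl⟩ := Subgroup.mem_map.mp hz
        rw [Subgroup.mem_centralizer_iff]
        rintro m hm
        rw [Set.mem_singleton_iff] at hm
        subst hm
        have hcomm : g * w = w * g :=
          Subgroup.mem_centralizer_iff.mp hw g (Set.mem_singleton g)
        rw [← hg, ← map_mul, ← map_mul, hcomm]
      calc (Subgroup.centralizer {x}).index
          ∣ ((Subgroup.centralizer {g}).map (QuotientGroup.mk' N)).index :=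
            Subgroup.index_dvd_of_le hle
        _ ∣ (Subgroup.centralizer {g}).index :=
            (Subgroup.centralizer {g}).index_map_dvd (QuotientGroup.mk'_surjective N)
    exact dvd_transfer hdvd (h g hgreal ⟨p, b, hp, hpodd, hb⟩)
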